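/- Let x_1,...,x_n and y_1,...,y_n be complex numbers such that x_i + y_j ≠ 0 for all i, j. Then the determinant of the n×n matrix with (i,j) entry 1/(x_i + y_j) equals (∏_{i<j} (x_j - x_i)(y_j - y_i)) / (∏_{i,j} (x_i + y_j)). -/

import Mathlib

open Finset

private theorem cauchy_aux : ∀ (n : ℕ) (x y : Fin n → ℂ), (∀ i j, x i + y j ≠ 0) →
    Matrix.det (Matrix.of fun i j : Fin n => 1 / (x i + y j)) =
      (∏ i : Fin n, ∏ j : Fin n, if i < j then (x j - x i) * (y j - y i) else 1) /
        ∏ i : Fin n, ∏ j : Fin n, (x i + y j) := by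
  intro n
  induction n with
  | zero => intro x y h; simp
  | succ n ih =>
    intro x y h
    -- Step 1: subtract row 0 from every other row
    have step1 : Matrix.det (Matrix.of fun i j : Fin (n+1) => 1 / (x i + y j)) =
        Matrix.det (Matrix.of fun i j : Fin (n+1) =>
          if i = 0 then 1 / (x 0 + y j) else 1 / (x i + y j) - 1 / (x 0 + y j)) := by
      apply Matrix.det_eq_of_forall_row_eq_smul_add_const
        (c := fun i => if i = 0 then 0 else 1) (k := 0) (by simp)
      intro i j
      by_cases hi : i = 0 <;> simp [hi, Matrix.of_apply]
    -- Factor rows and columns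
    set C : Matrix (Fin (n+1)) (Fin (n+1)) ℂ :=
      Matrix.of fun i j => if i = 0 then (1 : ℂ) else 1 / (x i + y j) with hC
    have step2 : (Matrix.of fun i j : Fin (n+1) =>
          if i = 0 then 1 / (x 0 + y j) else 1 / (x i + y j) - 1 / (x 0 + y j)) =
        Matrix.of fun i j => (if i = 0 then (1:ℂ) else (x 0 - x i)) *
          (Matrix.of fun i j : Fin (n+1) => (1 / (x 0 + y j)) * C i j) i j := by
      ext i j
      by_cases hi : i = 0
      · simp [hi, hC]
      · simp only [Matrix.of_apply, hi, if_false, hC]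
        have h1 := h i j
        have h2 := h 0 j
        field_simp
        ring
    -- Step 3: subtract column 0 of C from every other column
    set D : Matrix (Fin (n+1)) (Fin (n+1)) ℂ :=
      Matrix.of fun i j => if j = 0 then C i 0 else C i j - C i 0 with hD
    have step3 : Matrix.det C = Matrix.det D := by
      rw [← Matrix.det_transpose C, ← Matrix.det_transpose D]
      apply Matrix.det_eq_of_forall_row_eq_smul_add_const
        (c := fun j => if j = 0 then 0 else 1) (k := 0) (by simp)
      intro j i
      by_cases hj : j = 0 <;> simp [hj, Matrix.transpose_apply, hD, Matrix.of_apply]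
    set E : Matrix (Fin (n+1)) (Fin (n+1)) ℂ :=
      Matrix.of fun i j => if i = 0 then (if j = 0 then (1:ℂ) else 0)
        else (if j = 0 then (1:ℂ) else 1 / (x i + y j)) with hE
    have step4 : D = Matrix.of fun i j => (if i = 0 then (1:ℂ) else 1 / (x i + y 0)) *
        (Matrix.of fun i j : Fin (n+1) =>
          (if j = 0 then (1:ℂ) else (y 0 - y j)) * E i j) i j := by
      ext i j
      by_cases hi : i = 0 <;> by_cases hj : j = 0 <;>
        simp only [hD, hE, hC, Matrix.of_apply, hi, hj, if_true, if_false, ite_true, ite_false]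
      · simp
      · simp
      · simp
      · have h1 := h i j
        have h2 := h i 0
        field_simp
        ring
    -- Step 5: expand det E along row 0
    have step5 : Matrix.det E =
        Matrix.det (Matrix.of fun i j : Fin n => 1 / (x i.succ + y j.succ)) := by
      rw [Matrix.det_succ_row_zero]
      rw [Finset.sum_eq_single 0]
      · have : E.submatrix Fin.succ ((0 : Fin (n+1)).succAbove) =
            Matrix.of fun i j : Fin n => 1 / (x i.succ + y j.succ) := by
          ext i j
          simp [hE, Fin.succ_ne_zero, Fin.succAbove_zero]
        rw [this]
        simp [hE]
      · intro j _ hj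
        simp [hE, hj]
      · simp
    rw [step1, step2, Matrix.det_mul_column, Matrix.det_mul_row, step3, step4,
      Matrix.det_mul_column, Matrix.det_mul_row, step5,
      ih (fun i => x i.succ) (fun j => y j.succ) (fun i j => h _ _)]
    -- now pure algebra with products
    have hr : (∏ i : Fin (n+1), (if i = 0 then (1:ℂ) else (x 0 - x i)))
        = ∏ i : Fin n, (x 0 - x i.succ) := by
      rw [Fin.prod_univ_succ]; simp [Fin.succ_ne_zero]
    have hu : (∏ i : Fin (n+1), (if i = 0 then (1:ℂ) else 1 / (x i + y 0)))
        = ∏ i : Fin n, 1 / (x i.succ + y 0) := by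
      rw [Fin.prod_univ_succ]; simp [Fin.succ_ne_zero]
    have hv : (∏ j : Fin (n+1), (if j = 0 then (1:ℂ) else (y 0 - y j)))
        = ∏ j : Fin n, (y 0 - y j.succ) := by
      rw [Fin.prod_univ_succ]; simp [Fin.succ_ne_zero]
    rw [hr, hu, hv]
    -- split RHS numerator
    have hnum : (∏ i : Fin (n+1), ∏ j : Fin (n+1),
          if i < j then (x j - x i) * (y j - y i) else 1)
        = (∏ j : Fin n, (x j.succ - x 0) * (y j.succ - y 0)) *
          ∏ i : Fin n, ∏ j : Fin n,
            if i < j then (x j.succ - x i.succ) * (y j.succ - y i.succ) else 1 := by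
      rw [Fin.prod_univ_succ]
      congr 1
      · rw [Fin.prod_univ_succ]
        simp [Fin.succ_pos]
      · apply Finset.prod_congr rfl
        intro i _
        rw [Fin.prod_univ_succ]
        simp [Fin.not_lt_zero, Fin.succ_lt_succ_iff]
    have hden : (∏ i : Fin (n+1), ∏ j : Fin (n+1), (x i + y j))
        = (∏ j : Fin (n+1), (x 0 + y j)) * ((∏ i : Fin n, (x i.succ + y 0)) *
          ∏ i : Fin n, ∏ j : Fin n, (x i.succ + y j.succ)) := by
      rw [Fin.prod_univ_succ]
      congr 1
      rw [← Finset.prod_mul_distrib]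
      apply Finset.prod_congr rfl
      intro i _
      rw [Fin.prod_univ_succ]
    rw [hnum, hden]
    -- nonzeroness
    have hA : (∏ j : Fin (n+1), (x 0 + y j)) ≠ 0 :=
      Finset.prod_ne_zero_iff.mpr fun j _ => h 0 j
    have hB : (∏ i : Fin n, (x i.succ + y 0)) ≠ 0 :=
      Finset.prod_ne_zero_iff.mpr fun i _ => h _ _
    have hDn : (∏ i : Fin n, ∏ j : Fin n, (x i.succ + y j.succ)) ≠ 0 :=
      Finset.prod_ne_zero_iff.mpr fun i _ =>
        Finset.prod_ne_zero_iff.mpr fun j _ => h _ _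
    have hs : (∏ j : Fin (n+1), 1 / (x 0 + y j)) = (∏ j : Fin (n+1), (x 0 + y j))⁻¹ := by
      simp [one_div]
    have hu2 : (∏ i : Fin n, 1 / (x i.succ + y 0)) = (∏ i : Fin n, (x i.succ + y 0))⁻¹ := by
      simp [one_div]
    rw [hs, hu2]
    have hsign : (∏ i : Fin n, (x 0 - x i.succ)) * (∏ j : Fin n, (y 0 - y j.succ))
        = ∏ j : Fin n, (x j.succ - x 0) * (y j.succ - y 0) := by
      rw [← Finset.prod_mul_distrib]
      apply Finset.prod_congr rfl
      intro i _
      ring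
    field_simp
    rw [← hsign]
    ring
  
theorem cauchy_double_alternant (n : ℕ) (x y : Fin n → ℂ)
    (h : ∀ i j, x i + y j ≠ 0) :
    Matrix.det (Matrix.of fun i j : Fin n => 1 / (x i + y j)) =
      (∏ p ∈ (univ ×ˢ univ).filter (fun p : Fin n × Fin n => p.1 < p.2),
          (x p.2 - x p.1) * (y p.2 - y p.1)) /
        ∏ i : Fin n, ∏ j : Fin n, (x i + y j) := by
  rw [Finset.prod_filter, Finset.prod_product]
  exact cauchy_aux n x y h
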